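/- (Particular involution.) Along the trisectrix limaçon solution, with U₃ = ½((r₂+r₄) − (r₁+r₃)) = (U₃ₓ, U₃_y) and P₃ = ½((p₂+p₄) − (p₁+p₃)) = (P₃ₓ, P₃_y), the Poisson bracket of the normal-mode angular momentum L = U₃ₓP₃_y − U₃_yP₃ₓ with the x-direction energy H₃ₓ = P₃ₓ²/(2m) + 2mω²U₃ₓ², namely the function (1/m)P₃ₓ(t)P₃_y(t) + 4mω²U₃ₓ(t)U₃_y(t), vanishes identically: (1/m)P₃ₓ(t)P₃_y(t) + 4mω²U₃ₓ(t)U₃_y(t) = 0 for all t ∈ ℝ. -/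

import Mathlib

noncomputable section

/-- The Euclidean plane. -/
abbrev Plane : Type := EuclideanSpace ℝ (Fin 2)

/-- A solution of the planar four-body system with pairwise quadratic potential
`V = (mω²/4)(2‖r₁−r₂‖² + 2‖r₂−r₃‖² + 2‖r₃−r₄‖² + 2‖r₁−r₄‖² − ‖r₁−r₃‖² − ‖r₂−r₄‖²)`:
four twice differentiable curves satisfying Newton's equations
`rᵢ'' = −ω²((rᵢ − r_{i+1}) + (rᵢ − r_{i−1}) − ½(rᵢ − r_{i+2}))` (indices mod 4). -/
def IsFourBodySolution (ω : ℝ) (r₁ r₂ r₃ r₄ : ℝ → Plane) : Prop :=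
  (Differentiable ℝ r₁ ∧ Differentiable ℝ (deriv r₁)) ∧
  (Differentiable ℝ r₂ ∧ Differentiable ℝ (deriv r₂)) ∧
  (Differentiable ℝ r₃ ∧ Differentiable ℝ (deriv r₃)) ∧
  (Differentiable ℝ r₄ ∧ Differentiable ℝ (deriv r₄)) ∧
  (∀ t : ℝ, deriv (deriv r₁) t =
    (-(ω ^ 2)) • ((r₁ t - r₂ t) + (r₁ t - r₄ t) - (1 / 2 : ℝ) • (r₁ t - r₃ t))) ∧
  (∀ t : ℝ, deriv (deriv r₂) t =
    (-(ω ^ 2)) • ((r₂ t - r₃ t) + (r₂ t - r₁ t) - (1 / 2 : ℝ) • (r₂ t - r₄ t))) ∧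
  (∀ t : ℝ, deriv (deriv r₃) t =
    (-(ω ^ 2)) • ((r₃ t - r₄ t) + (r₃ t - r₂ t) - (1 / 2 : ℝ) • (r₃ t - r₁ t))) ∧
  (∀ t : ℝ, deriv (deriv r₄) t =
    (-(ω ^ 2)) • ((r₄ t - r₁ t) + (r₄ t - r₃ t) - (1 / 2 : ℝ) • (r₄ t - r₂ t)))

/-- The trisectrix limaçon curve
`r(t) = (½(cos ωt + cos 2ωt), ½(sin ωt + sin 2ωt))`. -/
def limax (ω : ℝ) : ℝ → Plane := fun t =>
  (WithLp.equiv 2 (Fin 2 → ℝ)).symm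
    ![(Real.cos (ω * t) + Real.cos (2 * ω * t)) / 2,
      (Real.sin (ω * t) + Real.sin (2 * ω * t)) / 2]

/-- Normal-mode coordinate `U₃ = ½((r₂+r₄) − (r₁+r₃))`. -/
def U3 (r₁ r₂ r₃ r₄ : ℝ → Plane) (t : ℝ) : Plane :=
  (1 / 2 : ℝ) • ((r₂ t + r₄ t) - (r₁ t + r₃ t))

/-- Normal-mode momentum `P₃ = ½((p₂+p₄) − (p₁+p₃))`, where `pᵢ = m rᵢ'`. -/
def P3 (m : ℝ) (r₁ r₂ r₃ r₄ : ℝ → Plane) (t : ℝ) : Plane :=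
  (1 / 2 : ℝ) • ((m • deriv r₂ t + m • deriv r₄ t) - (m • deriv r₁ t + m • deriv r₃ t))


def vec (a b : ℝ) : Plane := (WithLp.equiv 2 (Fin 2 → ℝ)).symm ![a, b]

lemma vec_eq (a b : ℝ) : vec a b = a • EuclideanSpace.single (0 : Fin 2) (1:ℝ)
    + b • EuclideanSpace.single (1 : Fin 2) (1:ℝ) := by
  ext i
  fin_cases i <;>
    simp [vec, EuclideanSpace.single_apply]

lemma hasDerivAt_vec {f g : ℝ → ℝ} {f' g' t : ℝ} (hf : HasDerivAt f f' t)
    (hg : HasDerivAt g g' t) :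
    HasDerivAt (fun s => vec (f s) (g s)) (vec f' g') t := by
  simp only [vec_eq]
  exact (hf.smul_const _).add (hg.smul_const _)

def dlimax (ω t : ℝ) : Plane :=
  vec ((-(ω * Real.sin (ω * t)) - 2 * ω * Real.sin (2 * ω * t)) / 2)
    ((ω * Real.cos (ω * t) + 2 * ω * Real.cos (2 * ω * t)) / 2)

lemma hasDerivAt_limax (ω t : ℝ) :
    HasDerivAt (limax ω) (dlimax ω t) t := by
  have h1 : HasDerivAt (fun s => Real.cos (ω * s)) (-(ω * Real.sin (ω * t))) t := by
    simpa [Function.comp_def, mul_comm] using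
      (Real.hasDerivAt_cos (ω * t)).comp t ((hasDerivAt_id t).const_mul ω)
  have h2 : HasDerivAt (fun s => Real.cos (2 * ω * s)) (-(2 * ω * Real.sin (2 * ω * t))) t := by
    simpa [Function.comp_def, mul_comm] using
      (Real.hasDerivAt_cos (2 * ω * t)).comp t ((hasDerivAt_id t).const_mul (2 * ω))
  have h3 : HasDerivAt (fun s => Real.sin (ω * s)) (ω * Real.cos (ω * t)) t := by
    simpa [Function.comp_def, mul_comm] using
      (Real.hasDerivAt_sin (ω * t)).comp t ((hasDerivAt_id t).const_mul ω)
  have h4 : HasDerivAt (fun s => Real.sin (2 * ω * s)) (2 * ω * Real.cos (2 * ω * t)) t := by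
    simpa [Function.comp_def, mul_comm] using
      (Real.hasDerivAt_sin (2 * ω * t)).comp t ((hasDerivAt_id t).const_mul (2 * ω))
  exact hasDerivAt_vec ((h1.add h2).div_const 2) ((h3.add h4).div_const 2)

lemma deriv_limax_shift (ω c : ℝ) (t : ℝ) :
    deriv (fun s => limax ω (s + c)) t = dlimax ω (t + c) := by
  have h : HasDerivAt (fun s => limax ω (s + c)) (dlimax ω (t + c)) t := by
    have := HasDerivAt.scomp t (hasDerivAt_limax ω (t + c)) ((hasDerivAt_id t).add_const c)
    simp only [one_smul] at this
    exact this
  exact h.deriv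

lemma deriv_limax (ω : ℝ) (t : ℝ) :
    deriv (fun s => limax ω s) t = dlimax ω t := (hasDerivAt_limax ω t).deriv

/-- **particular involution.** Along the trisectrix limaçon solution
`rₖ(t) = r(t + (k−1)τ)`, `τ = π/(2ω)`, the Poisson bracket
`{L, H₃ₓ} = (1/m)P₃ₓP₃_y + 4mω²U₃ₓU₃_y` vanishes identically. -/
theorem particular_involution_limax (m ω : ℝ) (hm : 0 < m) (hω : 0 < ω) :
    ∀ t : ℝ,
      (1 / m) * P3 m (fun s => limax ω s) (fun s => limax ω (s + Real.pi / (2 * ω)))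
          (fun s => limax ω (s + 2 * (Real.pi / (2 * ω))))
          (fun s => limax ω (s + 3 * (Real.pi / (2 * ω)))) t 0
        * P3 m (fun s => limax ω s) (fun s => limax ω (s + Real.pi / (2 * ω)))
          (fun s => limax ω (s + 2 * (Real.pi / (2 * ω))))
          (fun s => limax ω (s + 3 * (Real.pi / (2 * ω)))) t 1
      + 4 * m * ω ^ 2
        * U3 (fun s => limax ω s) (fun s => limax ω (s + Real.pi / (2 * ω)))
          (fun s => limax ω (s + 2 * (Real.pi / (2 * ω))))
          (fun s => limax ω (s + 3 * (Real.pi / (2 * ω)))) t 0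
        * U3 (fun s => limax ω s) (fun s => limax ω (s + Real.pi / (2 * ω)))
          (fun s => limax ω (s + 2 * (Real.pi / (2 * ω))))
          (fun s => limax ω (s + 3 * (Real.pi / (2 * ω)))) t 1 = 0 := by
  intro t
  have hω' : ω ≠ 0 := ne_of_gt hω
  have a1 : ω * (t + Real.pi / (2 * ω)) = ω * t + Real.pi / 2 := by field_simp
  have a2 : ω * (t + 2 * (Real.pi / (2 * ω))) = ω * t + Real.pi := by field_simp
  have a3 : ω * (t + 3 * (Real.pi / (2 * ω))) = ω * t + Real.pi / 2 + Real.pi := by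
    field_simp; ring
  have b1 : 2 * ω * (t + Real.pi / (2 * ω)) = 2 * ω * t + Real.pi := by field_simp
  have b2 : 2 * ω * (t + 2 * (Real.pi / (2 * ω))) = 2 * ω * t + Real.pi + Real.pi := by
    field_simp; ring
  have b3 : 2 * ω * (t + 3 * (Real.pi / (2 * ω))) = 2 * ω * t + Real.pi + Real.pi + Real.pi := by
    field_simp; ring
  simp only [U3, P3, deriv_limax, deriv_limax_shift]
  simp only [dlimax, limax, vec, PiLp.smul_apply, PiLp.add_apply, PiLp.sub_apply,
    WithLp.equiv_symm_apply, PiLp.toLp_apply, Matrix.cons_val_zero, Matrix.cons_val_one, Matrix.head_cons,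
    smul_eq_mul]
  rw [a1, a2, a3, b1, b2, b3]
  simp only [Real.cos_add, Real.sin_add, Real.cos_pi, Real.sin_pi, Real.cos_pi_div_two,
    Real.sin_pi_div_two]
  have hm' : m ≠ 0 := ne_of_gt hm
  have key : m ^ 2 * m⁻¹ = m := by
    rw [sq, mul_assoc, mul_inv_cancel₀ hm', mul_one]
  linear_combination (-4 * ω ^ 2 * Real.sin (2 * ω * t) * Real.cos (2 * ω * t)) * key
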